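/- Every right-orderable group has the strong unique product property: for any finite nonempty subsets X, Y with |Y| ≥ 2, the product XY contains at least two uniquely decomposable elements x₁y₁ and x₂y₂ with y₁ ≠ y₂. -/

import Mathlib

/-- Every right-orderable group has the strong unique product property: if `G`
admits a strict total order invariant under right multiplication, then for any
finite nonempty subsets `X, Y ⊆ G` with `|Y| ≥ 2` the product `XY` contains two
uniquely decomposable elements `x₁y₁` and `x₂y₂` with `y₁ ≠ y₂`. -/
theorem strong_uniqueProd_of_rightOrderable
    {G : Type*} [Group G] (lt : G → G → Prop)
    (htot : IsStrictTotalOrder G lt)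
    (hinv : ∀ a b c : G, lt a b → lt (a * c) (b * c))
    (X Y : Finset G) (hX : X.Nonempty) (hY : 2 ≤ Y.card) :
    ∃ x₁ ∈ X, ∃ y₁ ∈ Y, ∃ x₂ ∈ X, ∃ y₂ ∈ Y,
      y₁ ≠ y₂ ∧ UniqueMul X Y x₁ y₁ ∧ UniqueMul X Y x₂ y₂ := by
  classical
  -- the "flipped" order, which is left-invariant
  set r : G → G → Prop := fun a b => lt a⁻¹ b⁻¹ with hr
  haveI : IsTrichotomous G r := ⟨by
    intro a b hab hba
    exact inv_injective (htot.trichotomous a⁻¹ b⁻¹ hab hba)⟩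
  haveI : IsIrrefl G r := ⟨fun a => htot.irrefl a⁻¹⟩
  haveI : IsTrans G r := ⟨fun a b c h1 h2 => htot.trans _ _ _ h1 h2⟩
  haveI hrtot : IsStrictTotalOrder G r := {}
  letI : LinearOrder G := linearOrderOfSTO r
  have hltr : ∀ a b : G, (a < b) ↔ r a b := fun a b => Iff.rfl
  have hmono : ∀ a b c : G, a < b → c * a < c * b := by
    intro a b c h
    have : lt (a⁻¹ * c⁻¹) (b⁻¹ * c⁻¹) := hinv a⁻¹ b⁻¹ c⁻¹ h
    show lt (c * a)⁻¹ (c * b)⁻¹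
    simpa [mul_inv_rev] using this
  have hYne : Y.Nonempty := Finset.card_pos.mp (by omega)
  obtain ⟨y₁, hy₁Y, hy₁max⟩ := Y.exists_max_image id hYne
  obtain ⟨y₂, hy₂Y, hy₂min⟩ := Y.exists_min_image id hYne
  obtain ⟨x₁, hx₁X, hx₁max⟩ := X.exists_max_image (fun x => x * y₁) hX
  obtain ⟨x₂, hx₂X, hx₂min⟩ := X.exists_min_image (fun x => x * y₂) hX
  refine ⟨x₁, hx₁X, y₁, hy₁Y, x₂, hx₂X, y₂, hy₂Y, ?_, ?_, ?_⟩
  · -- y₁ ≠ y₂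
    obtain ⟨a, haY, b, hbY, hab⟩ := Finset.one_lt_card.mp (by omega : 1 < Y.card)
    intro hEq
    apply hab
    have ha1 : a = y₁ := le_antisymm (hy₁max a haY) (hEq ▸ hy₂min a haY)
    have hb1 : b = y₁ := le_antisymm (hy₁max b hbY) (hEq ▸ hy₂min b hbY)
    rw [ha1, hb1]
  · -- UniqueMul X Y x₁ y₁ (maximum)
    intro a b ha hb hab
    have hble : b ≤ y₁ := hy₁max b hb
    rcases lt_or_eq_of_le hble with hblt | hbeq
    · exact absurd (hab ▸ lt_of_lt_of_le (hmono b y₁ a hblt) (hx₁max a ha)) (lt_irrefl _)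
    · subst hbeq
      exact ⟨mul_right_cancel hab, rfl⟩
  · -- UniqueMul X Y x₂ y₂ (minimum)
    intro a b ha hb hab
    have hble : y₂ ≤ b := hy₂min b hb
    rcases lt_or_eq_of_le hble with hblt | hbeq
    · exact absurd (hab ▸ lt_of_le_of_lt (hx₂min a ha) (hmono y₂ b a hblt)) (lt_irrefl _)
    · subst hbeq
      exact ⟨mul_right_cancel hab, rfl⟩
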